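/- Let Σ ∈ ℂ^{M×M} be Hermitian positive semidefinite and s ∈ ℂ^M. For μ > 0 the matrix Σ + μI is invertible, and the map μ ↦ ‖(Σ + μI)⁻¹.mulVec s‖₂ is antitone on (0, ∞): if 0 < μ₁ ≤ μ₂ then ‖(Σ + μ₂ I)⁻¹.mulVec s‖₂ ≤ ‖(Σ + μ₁ I)⁻¹.mulVec s‖₂. -/

import Mathlib

open Matrix ComplexOrder

/-- For a Hermitian positive semidefinite `Σ` and `μ > 0`, the matrix `Σ + μI` is
invertible, and `μ ↦ ‖(Σ + μI)⁻¹ s‖₂` is antitone on `(0, ∞)`. -/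
theorem regularized_norm_antitone (M : ℕ) (Sig : Matrix (Fin M) (Fin M) ℂ)
    (hSig : Sig.PosSemidef) (s : Fin M → ℂ) :
    (∀ μ : ℝ, 0 < μ →
      IsUnit (Sig + (μ : ℂ) • (1 : Matrix (Fin M) (Fin M) ℂ))) ∧
    (∀ μ₁ μ₂ : ℝ, 0 < μ₁ → μ₁ ≤ μ₂ →
      Real.sqrt (∑ m, ‖((Sig + (μ₂ : ℂ) • (1 : Matrix (Fin M) (Fin M) ℂ))⁻¹).mulVec s m‖ ^ 2)
        ≤ Real.sqrt (∑ m, ‖((Sig + (μ₁ : ℂ) • (1 : Matrix (Fin M) (Fin M) ℂ))⁻¹).mulVec s m‖ ^ 2)) := by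
  have key : ∀ μ : ℝ, 0 < μ → (Sig + (μ : ℂ) • (1 : Matrix (Fin M) (Fin M) ℂ)).PosDef := by
    intro μ hμ
    refine Matrix.PosDef.posSemidef_add hSig ?_
    rw [smul_one_eq_diagonal]
    exact .diagonal fun _ => by exact_mod_cast hμ
  refine ⟨fun μ hμ => (key μ hμ).isUnit, fun μ₁ μ₂ hμ₁ h12 => ?_⟩
  set A₁ := Sig + (μ₁ : ℂ) • (1 : Matrix (Fin M) (Fin M) ℂ) with hA₁def
  set A₂ := Sig + (μ₂ : ℂ) • (1 : Matrix (Fin M) (Fin M) ℂ) with hA₂def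
  have hA₁ := key μ₁ hμ₁
  have hA₂ := key μ₂ (hμ₁.trans_le h12)
  set c : ℝ := μ₂ - μ₁ with hc
  have hc0 : (0:ℝ) ≤ c := by simp [hc, h12]
  set x := A₂⁻¹.mulVec s with hx
  set y := A₁⁻¹.mulVec x with hy
  have hs : A₂.mulVec x = s := by
    rw [hx, mulVec_mulVec, Matrix.mul_nonsing_inv _ (isUnit_iff_ne_zero.mpr hA₂.det_pos.ne'), one_mulVec]
  have hμc : (μ₂:ℂ) = (μ₁:ℂ) + (c:ℂ) := by push_cast [hc]; ring
  have hA21 : A₂ = A₁ + (c:ℂ) • (1 : Matrix (Fin M) (Fin M) ℂ) := by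
    rw [hA₂def, hA₁def, hμc, add_smul, add_assoc]
  have hinv : A₁⁻¹.mulVec s = x + (c:ℂ) • y := by
    have h1 : A₁⁻¹.mulVec (A₁.mulVec x) = x := by
      rw [mulVec_mulVec, Matrix.nonsing_inv_mul _ (isUnit_iff_ne_zero.mpr hA₁.det_pos.ne'),
        one_mulVec]
    rw [← hs, hA21, add_mulVec, smul_mulVec, one_mulVec, mulVec_add, mulVec_smul, h1, hy]
  rw [hinv]
  refine Real.sqrt_le_sqrt ?_
  have hre : ∀ v : Fin M → ℂ, ∑ m, ‖v m‖^2 = (star v ⬝ᵥ v).re := by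
    intro v
    rw [dotProduct, Complex.re_sum]
    refine Finset.sum_congr rfl fun m _ => ?_
    rw [Pi.star_apply, Complex.star_def, mul_comm, Complex.mul_conj, Complex.ofReal_re,
      Complex.normSq_eq_norm_sq]
  rw [hre, hre]
  have hpsd : 0 ≤ star x ⬝ᵥ y := by
    rw [hy]
    exact hA₁.inv.posSemidef.dotProduct_mulVec_nonneg x
  have hpsd_re : 0 ≤ (star x ⬝ᵥ y).re := (Complex.nonneg_iff.mp hpsd).1
  have hyy : 0 ≤ (star y ⬝ᵥ y).re := (Complex.nonneg_iff.mp (dotProduct_star_self_nonneg y)).1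
  have hswap : (star y ⬝ᵥ x).re = (star x ⬝ᵥ y).re := by
    rw [star_dotProduct, Complex.star_def, Complex.conj_re]
  have hexp : star (x + (c:ℂ) • y) ⬝ᵥ (x + (c:ℂ) • y)
      = star x ⬝ᵥ x + (c:ℂ) * (star x ⬝ᵥ y) + ((c:ℂ) * (star y ⬝ᵥ x)
        + (c:ℂ) * ((c:ℂ) * (star y ⬝ᵥ y))) := by
    simp [star_add, star_smul, add_dotProduct, dotProduct_add, smul_dotProduct,
      dotProduct_smul, smul_eq_mul, Complex.star_def, Complex.conj_ofReal]
    ring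
  rw [hexp]
  simp only [Complex.add_re, Complex.mul_re, Complex.ofReal_re, Complex.ofReal_im]
  nlinarith [mul_nonneg hc0 hpsd_re, mul_nonneg hc0 (mul_nonneg hc0 hyy), hswap]
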